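/- The function α(t) = ∫₀¹ exp(-(1-ξ²)t/4) dξ satisfies the ordinary differential equation 4α'(t) + (1 + 2/t)α(t) = 2/t for all t > 0. -/
import Mathlib

noncomputable def Efun : ℝ → ℝ := fun x => ∫ u in (0:ℝ)..x, Real.exp (u^2)

lemma Efun_hasDerivAt (x : ℝ) : HasDerivAt Efun (Real.exp (x^2)) x :=
  ((Real.continuous_exp.comp (continuous_pow 2)).integral_hasStrictDerivAt 0 x).hasDerivAt

lemma closed_form (t : ℝ) (ht : 0 < t) :
    (∫ ξ in (0:ℝ)..1, Real.exp (-(1 - ξ^2) * t / 4))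
      = Real.exp (-t/4) * ((Real.sqrt t / 2)⁻¹ * Efun (Real.sqrt t / 2)) := by
  have hs : 0 < Real.sqrt t := Real.sqrt_pos.mpr ht
  have hc : Real.sqrt t / 2 ≠ 0 := by positivity
  have h1 : ∀ ξ : ℝ, Real.exp (-(1 - ξ^2) * t / 4)
      = Real.exp (-t/4) * Real.exp ((ξ * (Real.sqrt t / 2))^2) := by
    intro ξ
    rw [← Real.exp_add]
    congr 1
    have : Real.sqrt t ^ 2 = t := Real.sq_sqrt ht.le
    nlinarith [this]
  simp_rw [h1]
  rw [intervalIntegral.integral_const_mul]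
  rw [intervalIntegral.integral_comp_mul_right (fun u => Real.exp (u^2)) hc]
  simp [Efun, smul_eq_mul]

/-- `α(t) = ∫₀¹ exp(-(1-ξ²)t/4) dξ` satisfies `4α'(t) + (1 + 2/t)α(t) = 2/t` for `t > 0`. -/
theorem stmt_2 (α : ℝ → ℝ)
    (hα : ∀ t : ℝ, α t = ∫ ξ in (0:ℝ)..1, Real.exp (-(1 - ξ^2) * t / 4))
    (t : ℝ) (ht : 0 < t) :
    4 * deriv α t + (1 + 2 / t) * α t = 2 / t := by
  set G : ℝ → ℝ := fun τ => Real.exp (-τ/4) * ((Real.sqrt τ / 2)⁻¹ * Efun (Real.sqrt τ / 2))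
    with hGdef
  have hev : α =ᶠ[nhds t] G := by
    filter_upwards [eventually_gt_nhds ht] with τ hτ
    rw [hα τ, closed_form τ hτ]
  have hs : 0 < Real.sqrt t := Real.sqrt_pos.mpr ht
  have hsq : Real.sqrt t ^ 2 = t := Real.sq_sqrt ht.le
  -- derivative pieces
  have hsqrt : HasDerivAt Real.sqrt (1 / (2 * Real.sqrt t)) t := Real.hasDerivAt_sqrt ht.ne'
  have h1 : HasDerivAt (fun τ : ℝ => Real.exp (-τ/4)) (Real.exp (-t/4) * (-1/4)) t := by
    have : HasDerivAt (fun τ : ℝ => -τ/4) (-1/4) t := by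
      simpa using ((hasDerivAt_id t).neg.div_const 4)
    simpa using this.exp
  have hhalf : HasDerivAt (fun τ : ℝ => Real.sqrt τ / 2) (1 / (2 * Real.sqrt t) / 2) t :=
    hsqrt.div_const 2
  have h2 : HasDerivAt (fun τ : ℝ => (Real.sqrt τ / 2)⁻¹)
      (-(1 / (2 * Real.sqrt t) / 2) / (Real.sqrt t / 2)^2) t := by
    exact hhalf.inv (by positivity)
  have h3 : HasDerivAt (fun τ : ℝ => Efun (Real.sqrt τ / 2))
      (Real.exp ((Real.sqrt t / 2)^2) * (1 / (2 * Real.sqrt t) / 2)) t :=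
    (Efun_hasDerivAt _).comp t hhalf
  have hG : HasDerivAt G
      (Real.exp (-t/4) * (-1/4) * ((Real.sqrt t / 2)⁻¹ * Efun (Real.sqrt t / 2))
        + Real.exp (-t/4) *
          ((-(1 / (2 * Real.sqrt t) / 2) / (Real.sqrt t / 2)^2) * Efun (Real.sqrt t / 2)
            + (Real.sqrt t / 2)⁻¹ *
              (Real.exp ((Real.sqrt t / 2)^2) * (1 / (2 * Real.sqrt t) / 2)))) t :=
    h1.mul (h2.mul h3)
  have hderiv : deriv α t = deriv G t := hev.deriv_eq
  rw [hα t, closed_form t ht, hderiv, hG.deriv]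
  have hexp : Real.exp ((Real.sqrt t / 2)^2) = Real.exp (t/4) := by
    congr 1
    rw [div_pow, hsq]; norm_num
  have hab : Real.exp (-t/4) * Real.exp (t/4) = 1 := by
    rw [← Real.exp_add]; ring_nf; exact Real.exp_zero
  rw [hexp]
  set a := Real.exp (-t/4)
  set b := Real.exp (t/4)
  set s := Real.sqrt t
  set Et := Efun (s / 2)
  rw [← hsq]
  have ha : a ≠ 0 := Real.exp_ne_zero _
  have hb : b = a⁻¹ := by
    field_simp
    linear_combination hab
  rw [hb]
  field_simp
  ring
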